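/- Let $G = (V, E)$ be a finite undirected graph and $p : V \to (0,1]$. For each $v$ let $P(v) = p(v) + \sum_{v' : (v,v') \in E} p(v')$ be the total mass on the closed neighborhood of $v$. Then $\sum_{v \in V} \frac{p(v)}{P(v)} \leq \alpha(G)$, where $\alpha(G)$ is the independence number of $G$. -/

import Mathlib

/-- A finset of vertices is independent: no two distinct members are adjacent. -/
def IsIndepSet {V : Type*} (G : SimpleGraph V) (s : Finset V) : Prop :=
  ∀ u ∈ s, ∀ v ∈ s, u ≠ v → ¬ G.Adj u v

/-- The independence number of a finite graph. -/
noncomputable def indepNum (V : Type*) [Fintype V] (G : SimpleGraph V) : ℕ :=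
  sSup {n : ℕ | ∃ s : Finset V, IsIndepSet G s ∧ s.card = n}

lemma caro_wei_key {V : Type*} [Fintype V] [DecidableEq V]
    (G : SimpleGraph V) [DecidableRel G.Adj]
    (p : V → ℝ) (hp : ∀ v, 0 < p v) :
    ∀ n (s : Finset V), s.card ≤ n →
      ∃ t ⊆ s, IsIndepSet G t ∧
        ∑ v ∈ s, p v / (p v + ∑ v' ∈ G.neighborFinset v ∩ s, p v') ≤ (t.card : ℝ) := by
  intro n
  induction n with
  | zero =>
    intro s hs
    have : s = ∅ := Finset.card_eq_zero.mp (Nat.le_zero.mp hs)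
    subst this
    exact ⟨∅, Finset.Subset.refl _, fun u hu => absurd hu (Finset.notMem_empty u),
      by simp⟩
  | succ n ih =>
    intro s hs
    rcases s.eq_empty_or_nonempty with rfl | hne
    · exact ⟨∅, Finset.Subset.refl _, fun u hu => absurd hu (Finset.notMem_empty u),
        by simp⟩
    set f : V → ℝ := fun v => p v + ∑ v' ∈ G.neighborFinset v ∩ s, p v' with hf
    obtain ⟨w, hws, hwmin⟩ := s.exists_min_image f hne
    have hfpos : ∀ v, 0 < f v := fun v =>
      add_pos_of_pos_of_nonneg (hp v) (Finset.sum_nonneg fun x _ => (hp x).le)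
    set N : Finset V := insert w (G.neighborFinset w ∩ s) with hN
    have hNs : N ⊆ s := by
      intro x hx
      rcases Finset.mem_insert.mp hx with rfl | hx
      · exact hws
      · exact (Finset.mem_inter.mp hx).2
    set s' : Finset V := s \ N with hs'
    have hs'card : s'.card ≤ n := by
      have hwN : w ∈ N := Finset.mem_insert_self _ _
      have : s'.card < s.card := by
        apply Finset.card_lt_card
        constructor
        · exact Finset.sdiff_subset
        · intro h
          exact absurd (Finset.mem_sdiff.mp (h hws)).2 (by simpa using hwN)
      omega
    obtain ⟨t', ht's', ht'ind, ht'sum⟩ := ih s' hs'card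
    have hwt' : w ∉ t' := fun h => by
      have := Finset.mem_sdiff.mp (ht's' h)
      exact this.2 (Finset.mem_insert_self _ _)
    have hwadj : ∀ x ∈ t', ¬ G.Adj w x := by
      intro x hx hadj
      have hxs' := Finset.mem_sdiff.mp (ht's' hx)
      exact hxs'.2 (Finset.mem_insert_of_mem
        (Finset.mem_inter.mpr ⟨(G.mem_neighborFinset w x).mpr hadj, hxs'.1⟩))
    refine ⟨insert w t', ?_, ?_, ?_⟩
    · intro x hx
      rcases Finset.mem_insert.mp hx with rfl | hx
      · exact hws
      · exact (Finset.mem_sdiff.mp (ht's' hx)).1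
    · intro u hu v hv huv
      rcases Finset.mem_insert.mp hu with hu' | hu' <;>
        rcases Finset.mem_insert.mp hv with hv' | hv'
      · exact absurd (hu'.trans hv'.symm) huv
      · subst hu'; exact hwadj v hv'
      · subst hv'; exact fun h => hwadj u hu' (G.adj_symm h)
      · exact ht'ind u hu' v hv' huv
    · rw [Finset.card_insert_of_notMem hwt', ← Finset.sum_sdiff hNs]
      push_cast
      have h1 : ∑ v ∈ N, p v / f v ≤ 1 := by
        have hNsum : ∑ v ∈ N, p v = f w := by
          rw [hN, Finset.sum_insert (by simp)]
        calc ∑ v ∈ N, p v / f v ≤ ∑ v ∈ N, p v / f w := by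
              apply Finset.sum_le_sum
              intro v hv
              exact div_le_div_of_nonneg_left (hp v).le (hfpos w) (hwmin v (hNs hv))
          _ = (∑ v ∈ N, p v) / f w := by rw [Finset.sum_div]
          _ = 1 := by rw [hNsum, div_self (hfpos w).ne']
      have h2 : ∑ v ∈ s', p v / f v ≤
          ∑ v ∈ s', p v / (p v + ∑ v' ∈ G.neighborFinset v ∩ s', p v') := by
        apply Finset.sum_le_sum
        intro v hv
        apply div_le_div_of_nonneg_left (hp v).le
        · exact add_pos_of_pos_of_nonneg (hp v) (Finset.sum_nonneg fun x _ => (hp x).le)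
        · apply add_le_add_right
          apply Finset.sum_le_sum_of_subset_of_nonneg
          · exact Finset.inter_subset_inter_left (by rw [hs']; exact Finset.sdiff_subset)
          · intro x _ _; exact (hp x).le
      have := le_trans h2 ht'sum
      calc ∑ v ∈ s \ N, p v / f v + ∑ v ∈ N, p v / f v
          ≤ (t'.card : ℝ) + 1 := add_le_add this h1
        _ = _ := by ring

theorem stmt_7 {V : Type*} [Fintype V] [DecidableEq V]
    (G : SimpleGraph V) [DecidableRel G.Adj]
    (p : V → ℝ) (hp : ∀ v, 0 < p v) (hp1 : ∀ v, p v ≤ 1) :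
    ∑ v, p v / (p v + ∑ v' ∈ G.neighborFinset v, p v') ≤ (indepNum V G : ℝ) := by
  obtain ⟨t, hts, htind, htsum⟩ :=
    caro_wei_key G p hp (Finset.univ.card) Finset.univ le_rfl
  have heq : ∑ v, p v / (p v + ∑ v' ∈ G.neighborFinset v, p v')
      = ∑ v, p v / (p v + ∑ v' ∈ G.neighborFinset v ∩ Finset.univ, p v') := by
    simp
  rw [heq]
  refine le_trans htsum ?_
  have hmem : t.card ∈ {n : ℕ | ∃ s : Finset V, IsIndepSet G s ∧ s.card = n} :=
    ⟨t, htind, rfl⟩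
  have hbdd : BddAbove {n : ℕ | ∃ s : Finset V, IsIndepSet G s ∧ s.card = n} := by
    refine ⟨Fintype.card V, ?_⟩
    rintro n ⟨s, -, rfl⟩
    exact s.card_le_univ
  exact_mod_cast le_csSup hbdd hmem
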